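/- Let E be a metric space, C ⊆ ℝ compact, and f : C → E a bi-Lipschitz map (i.e. there is L ≥ 1 with L^{-1}|s − t| ≤ d(f(s), f(t)) ≤ L|s − t| for all s, t ∈ C); set K := f(C). Let π : E → ℝ be Lipschitz, and let N be the set of points x ∈ K for which there exists a sequence (y_j) in K \ {x} with y_j → x and |π(y_j) − π(x)| / d(y_j, x) → 0. Then Leb^1(π(N)) = 0. -/

import Mathlib

open MeasureTheory Filter Metric Set

/-- let `C ⊆ ℝ` be compact, `f : C → E` bi-Lipschitz with constant `L ≥ 1`,
`K = f(C)`, and `π : E → ℝ` Lipschitz. Let `N` be the set of points `x ∈ K` admitting a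
sequence `y_j ∈ K \ {x}` with `y_j → x` and `|π(y_j) − π(x)| / d(y_j, x) → 0`. Then
`Leb^1(π(N)) = 0`. -/
theorem image_of_degenerate_points_null {E : Type*} [MetricSpace E]
    (C : Set ℝ) (hC : IsCompact C)
    (f : ℝ → E) (L : NNReal) (hL : 1 ≤ L)
    (hbi : ∀ s ∈ C, ∀ t ∈ C,
      (L : ℝ)⁻¹ * |s - t| ≤ dist (f s) (f t) ∧ dist (f s) (f t) ≤ (L : ℝ) * |s - t|)
    (π : E → ℝ) (Lπ : NNReal) (hπ : LipschitzWith Lπ π) :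
    volume (π '' {x ∈ f '' C | ∃ u : ℕ → E,
      (∀ j, u j ∈ (f '' C) \ {x}) ∧
      Tendsto u atTop (nhds x) ∧
      Tendsto (fun j => |π (u j) - π x| / dist (u j) x) atTop (nhds 0)}) = 0 := by
  have hLpos : (0 : ℝ) < L := lt_of_lt_of_le zero_lt_one (by exact_mod_cast hL)
  -- the composition `π ∘ f` is Lipschitz on `C`
  have hgl : LipschitzOnWith (Lπ * L) (fun s => π (f s)) C := by
    rw [lipschitzOnWith_iff_dist_le_mul]
    intro s hs t ht
    calc dist (π (f s)) (π (f t)) ≤ Lπ * dist (f s) (f t) := hπ.dist_le_mul _ _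
      _ ≤ Lπ * ((L : ℝ) * |s - t|) := by
          exact mul_le_mul_of_nonneg_left (hbi s hs t ht).2 Lπ.coe_nonneg
      _ = ((Lπ * L : NNReal) : ℝ) * dist s t := by
          rw [Real.dist_eq]; push_cast; ring
  obtain ⟨G, hG, hGeq⟩ := hgl.extend_real
  -- bad sets: non-differentiability points and zero-derivative points of `G`
  set Z₁ : Set ℝ := {s | ¬ DifferentiableAt ℝ G s} with hZ₁
  set Z₂ : Set ℝ := {s | DifferentiableAt ℝ G s ∧ deriv G s = 0} with hZ₂
  -- key inclusion
  have hincl : (π '' {x ∈ f '' C | ∃ u : ℕ → E,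
      (∀ j, u j ∈ (f '' C) \ {x}) ∧
      Tendsto u atTop (nhds x) ∧
      Tendsto (fun j => |π (u j) - π x| / dist (u j) x) atTop (nhds 0)})
      ⊆ G '' Z₁ ∪ G '' Z₂ := by
    rintro _ ⟨x, ⟨⟨s, hsC, rfl⟩, u, humem, hulim, hqlim⟩, rfl⟩
    have hπG : π (f s) = G s := hGeq hsC
    by_cases hd : DifferentiableAt ℝ G s
    · -- show `deriv G s = 0`
      refine Or.inr ⟨s, ⟨hd, ?_⟩, hπG.symm⟩
      choose t ht hft using fun j => (humem j).1
      have hne : ∀ j, u j ≠ f s := fun j h => (humem j).2 h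
      have htne : ∀ j, t j ≠ s := by
        intro j h
        exact hne j (by rw [← hft j, h])
      have hdpos : ∀ j, 0 < dist (u j) (f s) := fun j => dist_pos.2 (hne j)
      have hupp : ∀ j, dist (u j) (f s) ≤ (L : ℝ) * |t j - s| := by
        intro j; rw [← hft j]; exact (hbi (t j) (ht j) s hsC).2
      have hlow : ∀ j, (L : ℝ)⁻¹ * |t j - s| ≤ dist (u j) (f s) := by
        intro j; rw [← hft j]; exact (hbi (t j) (ht j) s hsC).1
      have hdist0 : Tendsto (fun j => dist (u j) (f s)) atTop (nhds 0) :=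
        tendsto_iff_dist_tendsto_zero.1 hulim
      -- `t j → s`
      have htlim : Tendsto t atTop (nhds s) := by
        rw [tendsto_iff_dist_tendsto_zero]
        have hb : ∀ j, dist (t j) s ≤ (L : ℝ) * dist (u j) (f s) := by
          intro j
          rw [Real.dist_eq]
          have := hlow j
          calc |t j - s| = (L : ℝ) * ((L : ℝ)⁻¹ * |t j - s|) := by
                field_simp
            _ ≤ (L : ℝ) * dist (u j) (f s) :=
                mul_le_mul_of_nonneg_left this (le_of_lt hLpos)
        have : Tendsto (fun j => (L : ℝ) * dist (u j) (f s)) atTop (nhds 0) := by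
          simpa using hdist0.const_mul (L : ℝ)
        exact squeeze_zero (fun j => dist_nonneg) hb this
      -- slopes along the sequence tend to `|deriv G s|`
      have hslope : Tendsto (fun j => |slope G s (t j)|) atTop (nhds |deriv G s|) := by
        have h1 : Tendsto (slope G s) (nhdsWithin s {s}ᶜ) (nhds (deriv G s)) :=
          hasDerivAt_iff_tendsto_slope.1 hd.hasDerivAt
        have h2 : Tendsto t atTop (nhdsWithin s {s}ᶜ) :=
          tendsto_nhdsWithin_of_tendsto_nhds_of_eventually_within _ htlim
            (Eventually.of_forall (fun j => htne j))
        exact (continuous_abs.tendsto _).comp (h1.comp h2)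
      -- but the slopes tend to `0`
      have hslope0 : Tendsto (fun j => |slope G s (t j)|) atTop (nhds 0) := by
        have hb : ∀ j, |slope G s (t j)| ≤
            (L : ℝ) * (|π (u j) - π (f s)| / dist (u j) (f s)) := by
          intro j
          have habs : 0 < |t j - s| := abs_pos.2 (sub_ne_zero.2 (htne j))
          have hGt : G (t j) = π (u j) := by rw [← hft j]; exact (hGeq (ht j)).symm
          have : |slope G s (t j)| = |π (u j) - π (f s)| / |t j - s| := by
            rw [slope_def_field, div_eq_inv_mul, abs_mul, abs_inv, hGt, hπG]
            rw [div_eq_inv_mul, abs_sub_comm (t j) s]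
          rw [this, mul_div_assoc' ]
          rw [div_le_div_iff₀ habs (hdpos j)]
          calc |π (u j) - π (f s)| * dist (u j) (f s)
              ≤ |π (u j) - π (f s)| * ((L : ℝ) * |t j - s|) :=
                mul_le_mul_of_nonneg_left (hupp j) (abs_nonneg _)
            _ = (L : ℝ) * |π (u j) - π (f s)| * |t j - s| := by ring
        have : Tendsto (fun j => (L : ℝ) * (|π (u j) - π (f s)| / dist (u j) (f s)))
            atTop (nhds 0) := by
          simpa using hqlim.const_mul (L : ℝ)
        exact squeeze_zero (fun j => abs_nonneg _) hb this
      have : |deriv G s| = 0 := tendsto_nhds_unique hslope hslope0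
      exact abs_eq_zero.1 this
    · exact Or.inl ⟨s, hd, hπG.symm⟩
  -- the image of `Z₁` is null (Rademacher + Lipschitz image of null set)
  have h1 : volume (G '' Z₁) = 0 := by
    have hz : volume Z₁ = 0 := by
      have := hG.ae_differentiableAt (μ := volume)
      rwa [ae_iff] at this
    have hm := hG.hausdorffMeasure_image_le (zero_le_one) Z₁
    rw [MeasureTheory.hausdorffMeasure_real] at hm
    refine le_antisymm ?_ (zero_le)
    calc volume (G '' Z₁) ≤ ((Lπ * L : NNReal) : ENNReal) ^ (1 : ℝ) * volume Z₁ := hm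
      _ = 0 := by rw [hz, mul_zero]
  -- the image of `Z₂` is null (Sard)
  have h2 : volume (G '' Z₂) = 0 := by
    have hf' : ∀ x ∈ Z₂, HasFDerivWithinAt G (0 : ℝ →L[ℝ] ℝ) Z₂ x := by
      intro x hx
      have hda : HasDerivAt G 0 x := hx.2 ▸ hx.1.hasDerivAt
      have h0 : ContinuousLinearMap.toSpanSingleton ℝ (0 : ℝ) = 0 := by
        ext; simp
      have := hda.hasFDerivAt
      rw [h0] at this
      exact this.hasFDerivWithinAt
    have hdet : ∀ x ∈ Z₂, (0 : ℝ →L[ℝ] ℝ).det = 0 := by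
      intro x _
      simp [ContinuousLinearMap.det]
    exact addHaar_image_eq_zero_of_det_fderivWithin_eq_zero volume hf' hdet
  refine le_antisymm ?_ (zero_le)
  calc volume (π '' _) ≤ volume (G '' Z₁ ∪ G '' Z₂) := measure_mono hincl
    _ ≤ volume (G '' Z₁) + volume (G '' Z₂) := measure_union_le _ _
    _ = 0 := by rw [h1, h2, add_zero]
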